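/- Let d ≥ 1 and let x(d,t) be the unique value in [0,1) with ∫_0^{x(d,t)} dv/(1−v^d) = t. Then for every t ∈ [0,1], ∫_0^{x(d,t)} (1 + log u)/(1 − u^d) du ≤ 0. -/

import Mathlib

open Set MeasureTheory Filter
open scoped Interval

theorem integral_sign_condition (d t x : ℝ) (hd : 1 ≤ d) (ht : t ∈ Set.Icc (0:ℝ) 1)
    (hx : x ∈ Set.Ico (0:ℝ) 1)
    (hxt : (∫ v in (0:ℝ)..x, 1 / (1 - v ^ d)) = t) :
    (∫ u in (0:ℝ)..x, (1 + Real.log u) / (1 - u ^ d)) ≤ 0 := by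
  obtain ⟨hx0, hx1⟩ := hx
  obtain ⟨ht0, ht1⟩ := ht
  rcases eq_or_lt_of_le hx0 with rfl | hx0'
  · simp
  set f : ℝ → ℝ := fun v => 1 / (1 - v ^ d) with hf_def
  have hc : 0 < 1 - x := by linarith
  have hpow : ∀ v ∈ Icc (0:ℝ) x, v ^ d ≤ v := by
    intro v hv
    have h1 : v ^ d ≤ v ^ (1:ℝ) :=
      Real.rpow_le_rpow_of_exponent_ge' hv.1 (le_trans hv.2 hx1.le) zero_le_one hd
    simpa using h1
  have hden : ∀ v ∈ Icc (0:ℝ) x, 1 - x ≤ 1 - v ^ d := by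
    intro v hv
    have h1 := hpow v hv
    have h2 := hv.2
    linarith
  have hdenpos : ∀ v ∈ Icc (0:ℝ) x, 0 < 1 - v ^ d := fun v hv =>
    lt_of_lt_of_le hc (hden v hv)
  have hf1 : ∀ v ∈ Icc (0:ℝ) x, 1 ≤ f v := by
    intro v hv
    rw [hf_def]
    rw [le_div_iff₀ (hdenpos v hv), one_mul]
    have := Real.rpow_nonneg hv.1 d
    linarith
  have hfub : ∀ v ∈ Icc (0:ℝ) x, f v ≤ 1 / (1 - x) :=
    fun v hv => one_div_le_one_div_of_le hc (hden v hv)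
  have hcpow : Continuous fun v : ℝ => v ^ d :=
    continuous_id.rpow_const fun v => Or.inr (by linarith)
  have hfcA : ∀ v ∈ Icc (0:ℝ) x, ContinuousAt f v := by
    intro v hv
    exact continuousAt_const.div ((continuous_const.sub hcpow).continuousAt)
      (ne_of_gt (hdenpos v hv))
  have hfc : ContinuousOn f (Icc 0 x) := fun v hv => (hfcA v hv).continuousWithinAt
  have hfint : ∀ u ∈ Icc (0:ℝ) x, IntervalIntegrable f MeasureTheory.volume 0 u := by
    intro u hu
    have : ContinuousOn f (uIcc 0 u) := by
      rw [uIcc_of_le hu.1]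
      exact hfc.mono (Icc_subset_Icc le_rfl hu.2)
    exact this.intervalIntegrable
  set F : ℝ → ℝ := fun u => ∫ v in (0:ℝ)..u, f v with hF_def
  have hF0 : F 0 = 0 := intervalIntegral.integral_same
  have hFx : F x = t := hxt
  have hFcont : ContinuousOn F (Icc 0 x) := by
    have h1 : MeasureTheory.IntegrableOn f (uIcc 0 x) := by
      rw [uIcc_of_le hx0]
      exact hfc.integrableOn_Icc
    simpa [uIcc_of_le hx0] using intervalIntegral.continuousOn_primitive_interval h1
  have hFlb : ∀ u ∈ Icc (0:ℝ) x, u ≤ F u := by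
    intro u hu
    have h := intervalIntegral.integral_mono_on (f := fun _ => (1:ℝ)) (g := f) hu.1
      intervalIntegrable_const (hfint u hu)
      (fun v hv => hf1 v ⟨hv.1, le_trans hv.2 hu.2⟩)
    simpa using h
  have hFub : ∀ u ∈ Icc (0:ℝ) x, F u ≤ u / (1 - x) := by
    intro u hu
    have h := intervalIntegral.integral_mono_on (f := f) (g := fun _ => 1/(1-x)) hu.1
      (hfint u hu) intervalIntegrable_const
      (fun v hv => hfub v ⟨hv.1, le_trans hv.2 hu.2⟩)
    simpa [mul_one_div, div_eq_mul_inv] using h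
  have hFnn : ∀ u ∈ Icc (0:ℝ) x, 0 ≤ F u := fun u hu => le_trans hu.1 (hFlb u hu)
  have hmeasf : Measurable f := measurable_const.div (measurable_const.sub hcpow.measurable)
  have hFderiv : ∀ u ∈ Ioo (0:ℝ) x, HasDerivAt F (f u) u := by
    intro u hu
    have hu' : u ∈ Icc (0:ℝ) x := ⟨hu.1.le, hu.2.le⟩
    exact intervalIntegral.integral_hasDerivAt_right (hfint u hu')
      ⟨Set.univ, Filter.univ_mem, hmeasf.aestronglyMeasurable.restrict⟩
      (hfcA u hu')
  set g : ℝ → ℝ := fun u => (1 + Real.log u) * F u with hg_def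
  have hg0 : g 0 = 0 := by simp [hg_def, hF0]
  have hgx : g x = (1 + Real.log x) * t := by
    rw [show g x = (1 + Real.log x) * F x from rfl, hFx]
  set A : ℝ → ℝ := fun u => F u / u with hA_def
  set B : ℝ → ℝ := fun u => (1 + Real.log u) / (1 - u ^ d) with hB_def
  have hlognp : ∀ u ∈ Icc (0:ℝ) x, Real.log u ≤ 0 := by
    intro u hu
    rcases eq_or_lt_of_le hu.1 with rfl | hupos
    · simp
    · exact Real.log_nonpos hupos.le (le_trans hu.2 hx1.le)
  have habs : ∀ u ∈ Icc (0:ℝ) x, |1 + Real.log u| ≤ 1 - Real.log u := by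
    intro u hu
    have := hlognp u hu
    rw [abs_le]
    constructor <;> linarith
  have hgderiv : ∀ u ∈ Ioo (0:ℝ) x, HasDerivWithinAt g (A u + B u) (Ioi u) u := by
    intro u hu
    have h1 : HasDerivAt (fun u : ℝ => 1 + Real.log u) u⁻¹ u :=
      (Real.hasDerivAt_log (ne_of_gt hu.1)).const_add 1
    have h2 := h1.mul (hFderiv u hu)
    have h3 : u⁻¹ * F u + (1 + Real.log u) * f u = A u + B u := by
      rw [hA_def, hB_def, hf_def]
      field_simp
    replace h2 : HasDerivAt g (u⁻¹ * F u + (1 + Real.log u) * f u) u := h2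
    exact (h3 ▸ h2).hasDerivWithinAt
  have hgcont : ContinuousOn g (Icc 0 x) := by
    intro u hu
    rcases eq_or_lt_of_le hu.1 with rfl | hupos
    · have hBc : Continuous (fun u : ℝ => (u - u * Real.log u) / (1 - x)) :=
        (continuous_id.sub Real.continuous_mul_log).div_const _
      have hBt : Tendsto (fun u : ℝ => (u - u * Real.log u) / (1 - x))
          (nhdsWithin 0 (Icc 0 x)) (nhds 0) := by
        have h := hBc.tendsto 0
        simp only [Real.log_zero, mul_zero, sub_zero, zero_div] at h
        exact h.mono_left nhdsWithin_le_nhds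
      have key : Tendsto g (nhdsWithin 0 (Icc 0 x)) (nhds 0) := by
        apply squeeze_zero_norm' ?_ hBt
        filter_upwards [self_mem_nhdsWithin] with u hu'
        have h1 : |F u| ≤ u / (1 - x) := by
          rw [abs_of_nonneg (hFnn u hu')]
          exact hFub u hu'
        have h2 := habs u hu'
        have h3 : (0:ℝ) ≤ 1 - Real.log u := by linarith [hlognp u hu']
        calc ‖g u‖ = |1 + Real.log u| * |F u| := by rw [hg_def]; exact abs_mul _ _
          _ ≤ (1 - Real.log u) * (u / (1 - x)) :=
            mul_le_mul h2 h1 (abs_nonneg _) h3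
          _ = (u - u * Real.log u) / (1 - x) := by ring
      have : g 0 = 0 := hg0
      unfold ContinuousWithinAt
      rw [this]
      exact key
    · exact ((continuousAt_const.add (Real.continuousAt_log (ne_of_gt hupos))).continuousWithinAt.mul
        (hFcont u hu))
  -- integrability of A
  have hIoc : Ι (0:ℝ) x = Ioc 0 x := uIoc_of_le hx0
  have hA_meas : MeasureTheory.AEStronglyMeasurable A (MeasureTheory.volume.restrict (Ι (0:ℝ) x)) := by
    rw [hIoc]
    have hAc : ContinuousOn A (Ioc 0 x) := by
      apply ContinuousOn.div (hFcont.mono Ioc_subset_Icc_self) continuousOn_id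
      exact fun u hu => ne_of_gt hu.1
    exact hAc.aestronglyMeasurable measurableSet_Ioc
  have hA_int : IntervalIntegrable A MeasureTheory.volume 0 x := by
    apply IntervalIntegrable.mono_fun' (g := fun _ => 1/(1-x)) intervalIntegrable_const hA_meas
    rw [hIoc]
    filter_upwards [MeasureTheory.ae_restrict_mem measurableSet_Ioc] with u hu
    have hu' : u ∈ Icc (0:ℝ) x := ⟨hu.1.le, hu.2⟩
    have h1 : 0 ≤ A u := div_nonneg (hFnn u hu') hu.1.le
    rw [Real.norm_eq_abs, abs_of_nonneg h1, hA_def]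
    rw [div_le_iff₀ hu.1]
    calc F u ≤ u / (1 - x) := hFub u hu'
      _ = 1 / (1 - x) * u := by ring
  -- integrability of B
  have hB_meas : MeasureTheory.AEStronglyMeasurable B (MeasureTheory.volume.restrict (Ι (0:ℝ) x)) :=
    (((measurable_const.add Real.measurable_log).div
      (measurable_const.sub hcpow.measurable)).aestronglyMeasurable).restrict
  have hneglog_int : IntervalIntegrable (fun u => -Real.log u) MeasureTheory.volume 0 x := by
    apply intervalIntegral.intervalIntegrable_deriv_of_nonneg
      (g := fun u => u - u * Real.log u)
    · exact (continuous_id.sub Real.continuous_mul_log).continuousOn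
    · intro u hu
      rw [min_eq_left hx0, max_eq_right hx0] at hu
      have h1 : HasDerivAt (fun u : ℝ => u - u * Real.log u) (1 - (Real.log u + 1)) u :=
        (hasDerivAt_id u).sub (Real.hasDerivAt_mul_log (ne_of_gt hu.1))
      convert h1 using 1
      ring
    · intro u hu
      rw [min_eq_left hx0, max_eq_right hx0] at hu
      have := Real.log_nonpos hu.1.le (le_trans hu.2.le hx1.le)
      linarith
  have hmaj_int : IntervalIntegrable (fun u => (1 + -Real.log u) * (1/(1-x)))
      MeasureTheory.volume 0 x :=
    ((intervalIntegrable_const (c := (1:ℝ))).add hneglog_int).mul_const _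
  have hB_int : IntervalIntegrable B MeasureTheory.volume 0 x := by
    apply IntervalIntegrable.mono_fun' hmaj_int hB_meas
    rw [hIoc]
    filter_upwards [MeasureTheory.ae_restrict_mem measurableSet_Ioc] with u hu
    have hu' : u ∈ Icc (0:ℝ) x := ⟨hu.1.le, hu.2⟩
    have hdp := hdenpos u hu'
    have h2 := habs u hu'
    have h3 : (0:ℝ) ≤ 1 - Real.log u := by linarith [hlognp u hu']
    have h4 : 1 / (1 - u ^ d) ≤ 1 / (1 - x) := hfub u hu'
    rw [Real.norm_eq_abs, hB_def]
    rw [abs_div, abs_of_pos hdp, div_eq_mul_one_div]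
    calc |1 + Real.log u| * (1 / (1 - u ^ d))
        ≤ (1 - Real.log u) * (1 / (1 - x)) :=
          mul_le_mul h2 h4 (by positivity) h3
      _ = (1 + -Real.log u) * (1/(1-x)) := by ring
  -- FTC
  have hFTC : ∫ u in (0:ℝ)..x, (A u + B u) = g x - g 0 :=
    intervalIntegral.integral_eq_sub_of_hasDeriv_right_of_le hx0 hgcont hgderiv
      (hA_int.add hB_int)
  have hsplit : (∫ u in (0:ℝ)..x, A u) + ∫ u in (0:ℝ)..x, B u = (1 + Real.log x) * t := by
    rw [← intervalIntegral.integral_add hA_int hB_int, hFTC, hg0, hgx, sub_zero]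
  -- lower bound on ∫ A
  have hAlb : x ≤ ∫ u in (0:ℝ)..x, A u := by
    rw [intervalIntegral.integral_of_le hx0]
    have hA_int' : MeasureTheory.IntegrableOn A (Ioc 0 x) MeasureTheory.volume := by
      rw [← hIoc]
      exact hA_int.def'
    have hconst : MeasureTheory.IntegrableOn (fun _ : ℝ => (1:ℝ)) (Ioc 0 x)
        MeasureTheory.volume := by
      exact MeasureTheory.integrableOn_const measure_Ioc_lt_top.ne
    have h := MeasureTheory.setIntegral_mono_on hconst hA_int' measurableSet_Ioc
      (fun u hu => by
        rw [hA_def]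
        rw [le_div_iff₀ hu.1, one_mul]
        exact hFlb u ⟨hu.1.le, hu.2⟩)
    calc x = ∫ _ in Ioc (0:ℝ) x, (1:ℝ) := by
          simp [Real.volume_Ioc, hx0]
      _ ≤ ∫ u in Ioc (0:ℝ) x, A u := h
  -- conclude
  have htarget : (∫ u in (0:ℝ)..x, (1 + Real.log u) / (1 - u ^ d)) = ∫ u in (0:ℝ)..x, B u := by
    rw [hB_def]
  rw [htarget]
  have hBeq : (∫ u in (0:ℝ)..x, B u) = (1 + Real.log x) * t - ∫ u in (0:ℝ)..x, A u := by
    linarith [hsplit]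
  rw [hBeq]
  rcases le_or_gt (1 + Real.log x) 0 with h | h
  · have h1 : (1 + Real.log x) * t ≤ 0 := mul_nonpos_of_nonpos_of_nonneg h ht0
    linarith [hAlb, hx0'.le]
  · have h2 : (1 + Real.log x) * t ≤ (1 + Real.log x) * 1 :=
      mul_le_mul_of_nonneg_left ht1 h.le
    have h3 : Real.log x ≤ x - 1 := Real.log_le_sub_one_of_pos hx0'
    linarith [hAlb]
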